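/- Let Γ_n be defined by Γ_1 = 1 and the generalized Dumont-Foata recurrence, and let N = A(B+xI)(B+x̄I) + y·z̄·(A+I) + (zI+z̄A)(B+x̄I) + (ȳI+yA)(B+xI), where B(i,i)=i, B(i,i+1)=i+1, A(i+1,i)=1 and all other entries are zero. Then for all n ≥ 0, Γ_{n+1}(x,y,z,x̄,ȳ,z̄) = (N^n)(0,0). -/

import Mathlib

/-- Auxiliary: `GammaAux n = Γ_{n+1}` for the generalized Dumont-Foata polynomials. -/
def GammaAux {R : Type*} [CommRing R] : ℕ → R → R → R → R → R → R → R
  | 0, _, _, _, _, _, _ => 1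
  | n + 1, x, y, z, xb, yb, zb =>
      (x + zb) * (y + xb) * GammaAux n (x + 1) y z (xb + 1) yb zb
        + (x * (yb - y) + xb * (z - zb) - x * xb) * GammaAux n x y z xb yb zb

/-- The generalized Dumont-Foata polynomial `Γ_n` (defined for `n ≥ 1`, with `Γ_1 = 1`). -/
def Gamma {R : Type*} [CommRing R] (n : ℕ) : R → R → R → R → R → R → R :=
  GammaAux (n - 1)

/-- Entrywise product of ℕ×ℕ matrices; the (finite, for banded matrices) sums are
expressed with `finsum`. -/
noncomputable def matMul {R : Type*} [CommRing R] (M N : ℕ → ℕ → R) : ℕ → ℕ → R :=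
  fun i j => ∑ᶠ k, M i k * N k j

/-- Powers of a ℕ×ℕ matrix, with `matPow M 0` the identity matrix. -/
noncomputable def matPow {R : Type*} [CommRing R] (M : ℕ → ℕ → R) : ℕ → ℕ → ℕ → R
  | 0 => fun i j => if i = j then 1 else 0
  | n + 1 => matMul M (matPow M n)

/-- The matrix `B`: `B i i = i`, `B i (i+1) = i + 1`, other entries zero. -/
def matB {R : Type*} [CommRing R] : ℕ → ℕ → R := fun i j =>
  if j = i then (i : R) else if j = i + 1 then (i : R) + 1 else 0

/-- The matrix `A`: `A (i+1) i = 1`, other entries zero. -/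
def matA {R : Type*} [CommRing R] : ℕ → ℕ → R := fun i j =>
  if i = j + 1 then 1 else 0

/-- The identity ℕ×ℕ matrix. -/
def matI {R : Type*} [CommRing R] : ℕ → ℕ → R := fun i j => if i = j then 1 else 0

/-- The matrix `N = A(B+xI)(B+x̄I) + yz̄(A+I) + (zI+z̄A)(B+x̄I) + (ȳI+yA)(B+xI)`. -/
noncomputable def matN {R : Type*} [CommRing R] (x y z xb yb zb : R) : ℕ → ℕ → R :=
  fun i j =>
    matMul matA (matMul (fun a b => matB a b + x * matI a b)
        (fun a b => matB a b + xb * matI a b)) i j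
      + y * zb * (matA i j + matI i j)
      + matMul (fun a b => z * matI a b + zb * matA a b)
          (fun a b => matB a b + xb * matI a b) i j
      + matMul (fun a b => yb * matI a b + y * matA a b)
          (fun a b => matB a b + x * matI a b) i j

open MvPolynomial

abbrev R6 : Type := MvPolynomial (Fin 6) ℤ

noncomputable def sig : R6 →+* R6 :=
  (aeval (R := ℤ) (fun i : Fin 6 => if i = 0 ∨ i = 3 then X i + 1 else X i)).toRingHom

lemma sig_X0 : sig (X 0) = X 0 + 1 := by simp [sig]
lemma sig_X1 : sig (X 1) = X 1 := by simp [sig]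
lemma sig_X2 : sig (X 2) = X 2 := by simp [sig]
lemma sig_X3 : sig (X 3) = X 3 + 1 := by simp [sig]
lemma sig_X4 : sig (X 4) = X 4 := by simp [sig]
lemma sig_X5 : sig (X 5) = X 5 := by simp [sig]

lemma map_gammaAux (f : R6 →+* R6) (n : ℕ) :
    ∀ a b c d e g : R6, f (GammaAux n a b c d e g) =
      GammaAux n (f a) (f b) (f c) (f d) (f e) (f g) := by
  induction n with
  | zero => intro a b c d e g; simp [GammaAux]
  | succ n ih =>
      intro a b c d e g
      simp only [GammaAux, map_add, map_mul, map_sub, map_one, ih]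

noncomputable def Dlt (p : R6) : R6 := sig p - p

noncomputable def Dit : ℕ → R6 → R6
  | 0, p => p
  | i + 1, p => Dlt (Dit i p)

lemma Dlt_mul (a b : R6) : Dlt (a * b) = sig a * Dlt b + Dlt a * b := by
  simp only [Dlt, map_mul]; ring

lemma Dlt_add (a b : R6) : Dlt (a + b) = Dlt a + Dlt b := by
  simp only [Dlt, map_add]; ring

lemma Dit_one : ∀ i, Dit (i + 1) (1 : R6) = 0 := by
  intro i
  induction i with
  | zero => simp [Dit, Dlt]
  | succ j ih => show Dlt (Dit (j+1) 1) = 0; rw [ih]; simp [Dlt]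

noncomputable def dd (i : ℕ) : R6 :=
  X 0 * X 4 + X 1 * X 5 + X 2 * X 3
    + (i : R6) * (X 0 + X 1 + X 2 + X 3 + X 4 + X 5) + (i : R6) * (2 * (i : R6) - 1)

noncomputable def su (i : ℕ) : R6 := ((i : R6) + 1) * (X 2 + X 4 + (i : R6))

noncomputable def sb (i : ℕ) : R6 := (X 0 + X 5 + (i : R6)) * (X 1 + X 3 + (i : R6))

noncomputable def cc : R6 := X 0 * (X 4 - X 1) + X 3 * (X 2 - X 5) - X 0 * X 3

lemma sig_dd (i : ℕ) : sig (dd i) = dd i + X 4 + X 2 + 2 * (i : R6) := by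
  simp only [dd, map_add, map_mul, map_sub, map_natCast, map_one, map_ofNat,
    sig_X0, sig_X1, sig_X2, sig_X3, sig_X4, sig_X5]
  ring

lemma sig_sb (i : ℕ) : sig (sb i) = sb (i + 1) := by
  simp only [sb, map_add, map_mul, map_natCast, sig_X0, sig_X1, sig_X3, sig_X5]
  push_cast; ring

lemma sig_su (i : ℕ) : sig (su i) = su i := by
  simp only [su, map_add, map_mul, map_natCast, map_one, sig_X2, sig_X4]

lemma Dlt_dd (i : ℕ) : Dlt (dd i) = X 4 + X 2 + 2 * (i : R6) := by
  rw [Dlt, sig_dd]; ring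

lemma Dlt_sb (i : ℕ) : Dlt (sb i) = sb (i + 1) - sb i := by
  simp [Dlt, sig_sb]

lemma sig_c1 (i : ℕ) : sig ((i : R6) * (X 2 + X 4 + (i : R6) - 1)) =
    (i : R6) * (X 2 + X 4 + (i : R6) - 1) := by
  simp only [map_mul, map_add, map_sub, map_natCast, map_one, sig_X2, sig_X4]

lemma star (i : ℕ) (p : R6) :
    Dit i (sb 0 * sig p + cc * p) =
      (i : R6) * (X 2 + X 4 + (i : R6) - 1) * Dit (i - 1) p
        + dd i * Dit i p + sb i * Dit (i + 1) p := by
  induction i generalizing p with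
  | zero =>
      have hsig : sig p = p + Dlt p := by rw [Dlt]; ring
      have h : sb 0 + cc = dd 0 := by
        simp only [sb, cc, dd, Nat.cast_zero]; ring
      have e0 : Dit 0 (sb 0 * sig p + cc * p) = sb 0 * sig p + cc * p := rfl
      have e1 : Dit 1 p = Dlt p := rfl
      have e2 : Dit (0 - 1) p = p := rfl
      rw [e0, e1, e2, hsig, Nat.cast_zero]
      linear_combination p * h
  | succ i ih =>
      have key : Dit (i+1) (sb 0 * sig p + cc * p)
          = Dlt (Dit i (sb 0 * sig p + cc * p)) := rfl
      have hc1 : (i:R6) * (X 2 + X 4 + (i:R6) - 1) * Dlt (Dit (i-1) p)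
          = (i:R6) * (X 2 + X 4 + (i:R6) - 1) * Dit i p := by
        cases i with
        | zero => rw [Nat.cast_zero]; ring
        | succ j =>
            have : Dlt (Dit (j + 1 - 1) p) = Dit (j + 1) p := rfl
            rw [this]
      have hA : (i:R6) * (X 2 + X 4 + (i:R6) - 1) + Dlt (dd i)
          = ((i+1 : ℕ) : R6) * (X 2 + X 4 + ((i+1 : ℕ) : R6) - 1) := by
        rw [Dlt_dd]; push_cast; ring
      have hB : sig (dd i) + Dlt (sb i) = dd (i + 1) := by
        rw [sig_dd, Dlt_sb]
        simp only [dd, sb]; push_cast; ring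
      have hC : sig (sb i) = sb (i + 1) := sig_sb i
      have hd1 : Dlt ((i:R6) * (X 2 + X 4 + (i:R6) - 1)) = 0 := by
        rw [Dlt, sig_c1]; ring
      have e1 : Dlt (Dit i p) = Dit (i + 1) p := rfl
      have e2 : Dlt (Dit (i + 1) p) = Dit (i + 1 + 1) p := rfl
      rw [key, ih, Dlt_add, Dlt_add,
        Dlt_mul ((i:R6) * (X 2 + X 4 + (i:R6) - 1)) (Dit (i-1) p),
        Dlt_mul (dd i) (Dit i p), Dlt_mul (sb i) (Dit (i+1) p),
        Nat.add_sub_cancel, sig_c1, hd1, e1, e2]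
      linear_combination Dit i p * hA + Dit (i+1) p * hB + Dit (i+1+1) p * hC + hc1

noncomputable def qq : ℕ → ℕ → R6
  | 0, 0 => 1
  | 0, _ + 1 => 0
  | n + 1, 0 => dd 0 * qq n 0 + sb 0 * su 0 * qq n 1
  | n + 1, i + 1 => qq n i + dd (i+1) * qq n (i+1) + sb (i+1) * su (i+1) * qq n (i+2)

noncomputable def Ssup : ℕ → R6
  | 0 => 1
  | i + 1 => Ssup i * su i

noncomputable def Psub : ℕ → R6
  | 0 => 1
  | i + 1 => Psub i * sb i

noncomputable def G (n : ℕ) : R6 :=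
  GammaAux n (X 0) (X 1) (X 2) (X 3) (X 4) (X 5)

lemma Grec (n : ℕ) : G (n + 1) = sb 0 * sig (G n) + cc * G n := by
  have hs : sig (G n) = GammaAux n (X 0 + 1) (X 1) (X 2) (X 3 + 1) (X 4) (X 5) := by
    rw [G, map_gammaAux, sig_X0, sig_X1, sig_X2, sig_X3, sig_X4, sig_X5]
  rw [hs]
  show GammaAux (n+1) (X 0) (X 1) (X 2) (X 3) (X 4) (X 5) = _
  rw [show GammaAux (n+1) (X 0 : R6) (X 1) (X 2) (X 3) (X 4) (X 5)
      = (X 0 + X 5) * (X 1 + X 3) * GammaAux n (X 0 + 1) (X 1) (X 2) (X 3 + 1) (X 4) (X 5)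
        + (X 0 * (X 4 - X 1) + X 3 * (X 2 - X 5) - X 0 * X 3)
          * GammaAux n (X 0) (X 1) (X 2) (X 3) (X 4) (X 5) from by
    simp only [GammaAux]]
  rw [sb, cc, G, Nat.cast_zero]
  ring

lemma key2 (n : ℕ) : ∀ i, Ssup i * qq n i = Dit i (G n) := by
  induction n with
  | zero =>
      intro i
      cases i with
      | zero =>
          rw [show qq 0 0 = 1 from rfl, show Ssup 0 = 1 from rfl,
            show Dit 0 (G 0) = G 0 from rfl, show G 0 = 1 from rfl, one_mul]
      | succ j =>
          rw [show qq 0 (j+1) = 0 from rfl, show G 0 = 1 from rfl, Dit_one, mul_zero]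
  | succ n ih =>
      intro i
      have hstar := star i (G n)
      rw [← Grec] at hstar
      cases i with
      | zero =>
          have h0 := ih 0
          have h1 := ih 1
          rw [show Ssup 1 = Ssup 0 * su 0 from rfl] at h1
          rw [show Ssup 0 = (1:R6) from rfl] at h0 h1
          rw [show qq (n+1) 0 = dd 0 * qq n 0 + sb 0 * su 0 * qq n 1 from rfl,
            show Ssup 0 = (1:R6) from rfl, hstar, Nat.cast_zero]
          linear_combination dd 0 * h0 + sb 0 * h1
      | succ j =>
          have hj := ih j
          have hj1 := ih (j+1)
          have hj2 := ih (j+2)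
          have hs1 : Ssup (j+1) = Ssup j * su j := rfl
          have hs2 : Ssup (j+2) = Ssup j * su j * su (j+1) := by
            rw [show Ssup (j+2) = Ssup (j+1) * su (j+1) from rfl, hs1]
          have hco : ((j+1 : ℕ) : R6) * (X 2 + X 4 + ((j+1:ℕ) : R6) - 1) = su j := by
            rw [su]; push_cast; ring
          rw [hs1] at hj1
          rw [hs2] at hj2
          rw [show qq (n+1) (j+1)
              = qq n j + dd (j+1) * qq n (j+1) + sb (j+1) * su (j+1) * qq n (j+2) from rfl,
            hs1, hstar, Nat.add_sub_cancel, hco]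
          linear_combination su j * hj + dd (j+1) * hj1 + sb (j+1) * hj2

lemma finsum_pair {R : Type*} [CommRing R] (f : ℕ → R) (a : ℕ)
    (h : ∀ k, k ≠ a → k ≠ a + 1 → f k = 0) : ∑ᶠ k, f k = f a + f (a + 1) := by
  have hsub : Function.support f ⊆ ↑({a, a+1} : Finset ℕ) := by
    intro k hk
    simp only [Finset.coe_insert, Finset.coe_singleton, Set.mem_insert_iff,
      Set.mem_singleton_iff]
    by_contra hc
    push_neg at hc
    exact hk (h k hc.1 hc.2)
  rw [finsum_eq_finset_sum_of_support_subset f hsub]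
  rw [Finset.sum_insert (by simp), Finset.sum_singleton]

lemma finsum_triple {R : Type*} [CommRing R] (f : ℕ → R) (a : ℕ)
    (h : ∀ k, k ≠ a → k ≠ a + 1 → k ≠ a + 2 → f k = 0) :
    ∑ᶠ k, f k = f a + f (a + 1) + f (a + 2) := by
  have hsub : Function.support f ⊆ ↑({a, a+1, a+2} : Finset ℕ) := by
    intro k hk
    simp only [Finset.coe_insert, Finset.coe_singleton, Set.mem_insert_iff,
      Set.mem_singleton_iff]
    by_contra hc
    push_neg at hc
    exact hk (h k hc.1 hc.2.1 hc.2.2)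
  rw [finsum_eq_finset_sum_of_support_subset f hsub]
  rw [Finset.sum_insert (by simp), Finset.sum_insert (by simp), Finset.sum_singleton]
  ring

lemma finsum_zero'' {R : Type*} [CommRing R] (f : ℕ → R)
    (h : ∀ k, f k = 0) : ∑ᶠ k, f k = 0 := by
  have : f = fun _ => 0 := funext h
  rw [this]; exact finsum_zero

section MatEntries
variable {R : Type*} [CommRing R]

lemma Bx_apply (x : R) (k l : ℕ) :
    matB k l + x * matI k l =
      if l = k then (k : R) + x else if l = k + 1 then (k : R) + 1 else 0 := by
  simp only [matB, matI]
  rcases eq_or_ne l k with rfl | h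
  · simp
  · rcases eq_or_ne l (k + 1) with rfl | h2
    · simp [h, (by omega : ¬(k = k + 1))]
    · simp [h, h2, Ne.symm h]

lemma M1_apply (x xb : R) (k j : ℕ) :
    matMul (fun a b => matB a b + x * matI a b)
        (fun a b => matB a b + xb * matI a b) k j =
      if j = k then ((k : R) + x) * ((k : R) + xb)
      else if j = k + 1 then ((k : R) + x) * ((k : R) + 1) + ((k : R) + 1) * ((k : R) + 1 + xb)
      else if j = k + 2 then ((k : R) + 1) * ((k : R) + 2)
      else 0 := by
  rw [matMul]
  rw [finsum_pair _ k (fun l hl1 hl2 => by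
    rw [Bx_apply x k l, if_neg hl1, if_neg hl2, zero_mul])]
  rw [Bx_apply x k k, Bx_apply x k (k+1), Bx_apply xb k j, Bx_apply xb (k+1) j]
  split_ifs <;> first | (push_cast; ring1) | (exfalso; omega) | (exfalso; exact ‹False›)

lemma T1_zero (M : ℕ → ℕ → R) (j : ℕ) : matMul matA M 0 j = 0 := by
  rw [matMul]
  exact finsum_zero'' _ (fun l => by simp [matA])

lemma T1_succ (M : ℕ → ℕ → R) (m j : ℕ) : matMul matA M (m+1) j = M m j := by
  rw [matMul]
  rw [finsum_eq_single _ m (fun l hl => by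
    have : m + 1 ≠ l + 1 := by omega
    simp [matA, this, Ne.symm hl])]
  simp [matA]

lemma T3_zero (z zb : R) (M : ℕ → ℕ → R) (j : ℕ) :
    matMul (fun a b => z * matI a b + zb * matA a b) M 0 j = z * M 0 j := by
  rw [matMul]
  rw [finsum_eq_single _ 0 (fun l hl => by
    have h1 : ¬((0:ℕ) = l) := fun h => hl h.symm
    have h2 : ¬((0:ℕ) = l + 1) := by omega
    simp [matI, matA, h1, h2])]
  simp [matI, matA]

lemma T3_succ (z zb : R) (M : ℕ → ℕ → R) (m j : ℕ) :
    matMul (fun a b => z * matI a b + zb * matA a b) M (m+1) j =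
      zb * M m j + z * M (m+1) j := by
  rw [matMul]
  rw [finsum_pair _ m (fun l hl1 hl2 => by
    have h1 : ¬(m + 1 = l) := fun h => hl2 h.symm
    have h2 : ¬(m + 1 = l + 1) := by omega
    simp [matI, matA, h1, h2, Ne.symm hl1])]
  have h3 : ¬(m + 1 = m) := by omega
  simp [matI, matA, h3]

end MatEntries


noncomputable abbrev NN : ℕ → ℕ → R6 :=
  matN (X 0 : R6) (X 1) (X 2) (X 3) (X 4) (X 5)

set_option maxHeartbeats 1000000 in
lemma matN_apply0 (j : ℕ) :
    NN 0 j = if j = 0 then dd 0 else if j = 0 + 1 then su 0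
      else if 0 = j + 1 then sb j else 0 := by
  show matN (X 0 : R6) (X 1) (X 2) (X 3) (X 4) (X 5) 0 j = _
  rw [matN]
  rw [T1_zero, T3_zero, T3_zero]
  simp only [dd, su, sb, matA, matB, matI, Nat.cast_zero, Nat.cast_one]
  split_ifs <;> first | (push_cast; ring1) | (exfalso; omega) | (exfalso; exact ‹False›)

set_option maxHeartbeats 2000000 in
lemma matN_applyS (m j : ℕ) :
    NN (m+1) j = if j = m+1 then dd (m+1) else if j = (m+1) + 1 then su (m+1)
      else if m+1 = j + 1 then sb j else 0 := by
  show matN (X 0 : R6) (X 1) (X 2) (X 3) (X 4) (X 5) (m+1) j = _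
  rw [matN]
  rw [T1_succ, T3_succ, T3_succ, M1_apply]
  simp only [dd, su, sb, matA, matB, matI]
  rcases eq_or_ne j m with rfl | hjm <;>
    · split_ifs <;> first | (push_cast; ring1) | (exfalso; omega) | (exfalso; exact ‹False›)

lemma matPow_col : ∀ n i, matPow NN n i 0 = Psub i * qq n i := by
  intro n
  induction n with
  | zero =>
      intro i
      cases i with
      | zero =>
          show (if (0:ℕ) = 0 then (1:R6) else 0) = Psub 0 * qq 0 0
          rw [if_pos rfl, show Psub 0 = (1:R6) from rfl, show qq 0 0 = (1:R6) from rfl,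
            one_mul]
      | succ m =>
          show (if (m+1:ℕ) = 0 then (1:R6) else 0) = Psub (m+1) * qq 0 (m+1)
          rw [if_neg (by omega), show qq 0 (m+1) = 0 from rfl, mul_zero]
  | succ n ih =>
      intro i
      show matMul NN (matPow NN n) i 0 = Psub i * qq (n+1) i
      rw [matMul]
      cases i with
      | zero =>
          rw [finsum_pair _ 0 (fun k hk1 hk2 => by
            rw [matN_apply0, if_neg (by omega), if_neg (by omega), if_neg (by omega),
              zero_mul])]
          rw [matN_apply0 0, matN_apply0 1, if_pos rfl, if_neg (by omega),
            if_pos rfl, ih 0, ih 1,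
            show qq (n+1) 0 = dd 0 * qq n 0 + sb 0 * su 0 * qq n 1 from rfl,
            show Psub 1 = Psub 0 * sb 0 from rfl, show Psub 0 = (1:R6) from rfl]
          ring
      | succ m =>
          rw [finsum_triple _ m (fun k hk1 hk2 hk3 => by
            rw [matN_applyS, if_neg (by omega), if_neg (by omega), if_neg (by omega),
              zero_mul])]
          rw [matN_applyS m m, matN_applyS m (m+1), matN_applyS m (m+2),
            if_neg (by omega), if_neg (by omega), if_pos rfl,
            if_pos rfl,
            if_neg (by omega), if_pos rfl,
            ih m, ih (m+1), ih (m+2),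
            show qq (n+1) (m+1)
              = qq n m + dd (m+1) * qq n (m+1) + sb (m+1) * su (m+1) * qq n (m+2) from rfl,
            show Psub (m+2) = Psub (m+1) * sb (m+1) from rfl,
            show Psub (m+1) = Psub m * sb m from rfl]
          ring

theorem gamma_eq_final (n : ℕ) :
    GammaAux n (X 0 : MvPolynomial (Fin 6) ℤ) (X 1) (X 2) (X 3) (X 4) (X 5) =
      matPow (matN (X 0 : MvPolynomial (Fin 6) ℤ) (X 1) (X 2) (X 3) (X 4) (X 5))
        n 0 0 := by
  have h1 := matPow_col n 0
  have h2 := key2 n 0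
  rw [show Ssup 0 = (1:R6) from rfl, one_mul, show Dit 0 (G n) = G n from rfl] at h2
  rw [show Psub 0 = (1:R6) from rfl, one_mul] at h1
  show G n = matPow NN n 0 0
  rw [h1, h2]

open MvPolynomial in
theorem gamma_eq_matN_pow_entry (n : ℕ) :
    Gamma (n + 1) (X 0 : MvPolynomial (Fin 6) ℤ) (X 1) (X 2) (X 3) (X 4) (X 5) =
      matPow (matN (X 0 : MvPolynomial (Fin 6) ℤ) (X 1) (X 2) (X 3) (X 4) (X 5))
        n 0 0 := by
  have h : Gamma (n + 1) = (GammaAux n : R6 → R6 → R6 → R6 → R6 → R6 → R6) := by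
    rw [Gamma, Nat.add_sub_cancel]
  rw [h]
  exact gamma_eq_final n
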